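/- Let p_max = max_j p_j and S = {j : p_j = p_max}. Then the probability that the answer returned by the majority-vote procedure lies in S, i.e., Σ_{l ∈ S} Pr(a_l | p; N), tends to 1 as N → ∞. -/

import Mathlib

open Finset Filter

/-- Number of the `N` samples in `ω` equal to answer `j`. -/
def count {m N : ℕ} (ω : Fin N → Fin m) (j : Fin m) : ℕ :=
  (Finset.univ.filter fun i => ω i = j).card

/-- The set `J(ω)` of answers achieving the maximal count among the samples `ω`. -/
def maxSet {m N : ℕ} (ω : Fin N → Fin m) : Finset (Fin m) :=
  Finset.univ.filter fun j => ∀ k, count ω k ≤ count ω j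

/-- Majority-vote probability that answer `l` is returned after `N` i.i.d. samples
drawn from `p`: the most frequent answer is chosen, ties broken uniformly. -/
noncomputable def majorityProb {m : ℕ} (p : Fin m → ℝ) (N : ℕ) (l : Fin m) : ℝ :=
  ∑ ω : Fin N → Fin m, (∏ i, p (ω i)) *
    (if l ∈ maxSet ω then (1 : ℝ) / ((maxSet ω).card : ℝ) else 0)

lemma majorityProb_nonneg {m : ℕ} (p : Fin m → ℝ) (hnn : ∀ j, 0 ≤ p j) (N : ℕ) (l : Fin m) :
    0 ≤ majorityProb p N l := by
  apply Finset.sum_nonneg; intro ω _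
  refine mul_nonneg (Finset.prod_nonneg fun i _ => hnn _) ?_
  split <;> positivity

lemma maxSet_nonempty {m N : ℕ} (hm : 0 < m) (ω : Fin N → Fin m) : (maxSet ω).Nonempty := by
  have hne : (Finset.univ : Finset (Fin m)).Nonempty := ⟨⟨0, hm⟩, Finset.mem_univ _⟩
  obtain ⟨j, -, hj⟩ := Finset.exists_max_image Finset.univ (count ω) hne
  refine ⟨j, ?_⟩
  simp only [maxSet, Finset.mem_filter, Finset.mem_univ, true_and]
  exact fun k => hj k (Finset.mem_univ k)

lemma sum_prod_eq_pow {m N : ℕ} (w : Fin m → ℝ) :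
    ∑ ω : Fin N → Fin m, ∏ i, w (ω i) = (∑ j, w j) ^ N := by
  rw [← Fintype.piFinset_univ, ← Finset.prod_univ_sum]
  simp

lemma sum_majorityProb {m : ℕ} (hm : 0 < m) (p : Fin m → ℝ) (hsum : ∑ j, p j = 1) (N : ℕ) :
    ∑ l, majorityProb p N l = 1 := by
  unfold majorityProb
  rw [Finset.sum_comm]
  have h1 : ∀ ω : Fin N → Fin m,
      ∑ l, (∏ i, p (ω i)) * (if l ∈ maxSet ω then (1:ℝ) / ((maxSet ω).card : ℝ) else 0)
        = ∏ i, p (ω i) := by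
    intro ω
    rw [← Finset.mul_sum]
    have hcard : (0:ℝ) < ((maxSet ω).card : ℝ) := by
      exact_mod_cast Finset.card_pos.mpr (maxSet_nonempty hm ω)
    have : ∑ l, (if l ∈ maxSet ω then (1:ℝ) / ((maxSet ω).card : ℝ) else 0) = 1 := by
      rw [Finset.sum_ite_mem, Finset.univ_inter, Finset.sum_const, nsmul_eq_mul]
      field_simp
    rw [this, mul_one]
  rw [Finset.sum_congr rfl fun ω _ => h1 ω, sum_prod_eq_pow, hsum, one_pow]

lemma decay {m : ℕ} (p : Fin m → ℝ) (hnn : ∀ j, 0 ≤ p j) (hsum : ∑ a, p a = 1)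
    (l j : Fin m) (hlj : l ≠ j) (hlt : p l < p j) :
    ∃ c : ℝ, 0 ≤ c ∧ c < 1 ∧ ∀ N, majorityProb p N l ≤ c ^ N := by
  obtain ⟨t, ht1, htc⟩ : ∃ t : ℝ, 1 < t ∧ p l * t < p j := by
    rcases eq_or_lt_of_le (hnn l) with h0 | h0
    · exact ⟨2, one_lt_two, by rw [← h0]; linarith⟩
    · refine ⟨(p l + p j) / (2 * p l), ?_, ?_⟩
      · rw [lt_div_iff₀ (by linarith)]; linarith
      · have : p l * ((p l + p j) / (2 * p l)) = (p l + p j) / 2 := by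
          field_simp
        rw [this]; linarith
  have ht0 : (0:ℝ) < t := lt_trans one_pos ht1
  set w : Fin m → ℝ := fun a => p a * ((if a = l then t else 1) * (if a = j then t⁻¹ else 1))
    with hw
  have hwnn : ∀ a, 0 ≤ w a := by
    intro a; dsimp [w]
    have : (0:ℝ) < (if a = l then t else 1) * (if a = j then t⁻¹ else 1) := by
      split <;> split <;> positivity
    exact mul_nonneg (hnn a) this.le
  refine ⟨∑ a, w a, Finset.sum_nonneg fun a _ => hwnn a, ?_, ?_⟩
  · -- c < 1
    have hsplit : ∀ a, w a = p a + (if a = l then p l * (t - 1) else 0)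
        + (if a = j then p j * (t⁻¹ - 1) else 0) := by
      intro a
      rcases eq_or_ne a l with rfl | hal
      · simp [w, hlj]; ring
      · rcases eq_or_ne a j with rfl | haj
        · simp [w, hal]; ring
        · simp [w, hal, haj]
    rw [Finset.sum_congr rfl fun a _ => hsplit a]
    rw [Finset.sum_add_distrib, Finset.sum_add_distrib, Finset.sum_ite_eq' Finset.univ,
      Finset.sum_ite_eq' Finset.univ]
    simp only [Finset.mem_univ, if_true]
    have key : (t - 1) * (p l * t - p j) < 0 :=
      mul_neg_of_pos_of_neg (by linarith) (by linarith)
    have htipos : (0:ℝ) < t⁻¹ := inv_pos.mpr ht0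
    have htne : t ≠ 0 := ne_of_gt ht0
    have hneg : p l * (t - 1) + p j * (t⁻¹ - 1) < 0 := by
      have heq : p l * (t - 1) + p j * (t⁻¹ - 1) = t⁻¹ * ((t - 1) * (p l * t - p j)) := by
        field_simp
        ring
      rw [heq]; exact mul_neg_of_pos_of_neg htipos key
    linarith [hsum]
  · -- the bound
    intro N
    have hbd : ∀ ω : Fin N → Fin m,
        (∏ i, p (ω i)) * (if l ∈ maxSet ω then (1:ℝ) / ((maxSet ω).card : ℝ) else 0)
          ≤ ∏ i, w (ω i) := by
      intro ω
      have hwprod : ∏ i, w (ω i)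
          = (∏ i, p (ω i)) * (t ^ count ω l * t⁻¹ ^ count ω j) := by
        have h1 : ∏ i, (if ω i = l then t else 1) = t ^ count ω l := by
          rw [count, Finset.prod_ite, Finset.prod_const, Finset.prod_const, one_pow, mul_one]
        have h2 : ∏ i, (if ω i = j then t⁻¹ else 1) = t⁻¹ ^ count ω j := by
          rw [count, Finset.prod_ite, Finset.prod_const, Finset.prod_const, one_pow, mul_one]
        simp only [hw]
        rw [Finset.prod_mul_distrib, Finset.prod_mul_distrib, h1, h2]
      by_cases hmem : l ∈ maxSet ω
      · have hcard : (1:ℝ) ≤ ((maxSet ω).card : ℝ) := by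
          exact_mod_cast Finset.card_pos.mpr ⟨l, hmem⟩
        have hpnn : (0:ℝ) ≤ ∏ i, p (ω i) := Finset.prod_nonneg fun i _ => hnn _
        have hle : count ω j ≤ count ω l := by
          simp only [maxSet, Finset.mem_filter] at hmem
          exact hmem.2 j
        have hone_le : (1:ℝ) ≤ t ^ count ω l * t⁻¹ ^ count ω j := by
          rw [inv_pow, ← div_eq_mul_inv, le_div_iff₀ (by positivity), one_mul]
          exact pow_le_pow_right₀ ht1.le hle
        calc (∏ i, p (ω i)) * (if l ∈ maxSet ω then (1:ℝ) / ((maxSet ω).card : ℝ) else 0)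
            ≤ (∏ i, p (ω i)) * 1 := by
              refine mul_le_mul_of_nonneg_left ?_ hpnn
              rw [if_pos hmem, div_le_one (by linarith)]
              exact hcard
          _ = ∏ i, p (ω i) := mul_one _
          _ ≤ (∏ i, p (ω i)) * (t ^ count ω l * t⁻¹ ^ count ω j) :=
              le_mul_of_one_le_right hpnn hone_le
          _ = ∏ i, w (ω i) := hwprod.symm
      · simp only [hmem, if_false, mul_zero]
        exact Finset.prod_nonneg fun i _ => hwnn _
    calc majorityProb p N l ≤ ∑ ω : Fin N → Fin m, ∏ i, w (ω i) :=
          Finset.sum_le_sum fun ω _ => hbd ω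
      _ = (∑ a, w a) ^ N := sum_prod_eq_pow w

/-- The probability that the majority-vote procedure returns one of the
most likely answers (the set `S = {j : p j = p_max}`) tends to `1` as `N → ∞`. -/
theorem returned_in_maxProb_set_tendsto_one {m : ℕ} (hm : 0 < m) (p : Fin m → ℝ)
    (hnn : ∀ j, 0 ≤ p j) (hsum : ∑ j, p j = 1)
    (S : Finset (Fin m)) (hS : S = Finset.univ.filter fun j => ∀ k, p k ≤ p j) :
    Tendsto (fun N => ∑ l ∈ S, majorityProb p N l) atTop (nhds 1) := by
  have hSsub : S ⊆ Finset.univ := Finset.subset_univ S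
  have hzero : Tendsto (fun N => ∑ l ∈ Finset.univ \ S, majorityProb p N l) atTop (nhds 0) := by
    have : (0:ℝ) = ∑ l ∈ Finset.univ \ S, (0:ℝ) := by simp
    rw [this]
    refine tendsto_finset_sum _ fun l hl => ?_
    have hlS : l ∉ S := (Finset.mem_sdiff.mp hl).2
    obtain ⟨k, hk⟩ : ∃ k, p l < p k := by
      subst hS
      simp only [Finset.mem_filter, Finset.mem_univ, true_and, not_forall, not_le] at hlS
      exact hlS
    obtain ⟨j, -, hj⟩ := Finset.exists_max_image Finset.univ p ⟨⟨0, hm⟩, Finset.mem_univ _⟩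
    have hlt : p l < p j := lt_of_lt_of_le hk (hj k (Finset.mem_univ k))
    have hlj : l ≠ j := fun h => absurd hlt (by rw [h]; exact lt_irrefl _)
    obtain ⟨c, hc0, hc1, hcb⟩ := decay p hnn hsum l j hlj hlt
    exact squeeze_zero (fun N => majorityProb_nonneg p hnn N l) hcb
      (tendsto_pow_atTop_nhds_zero_of_lt_one hc0 hc1)
  have heq : ∀ N, ∑ l ∈ S, majorityProb p N l
      = 1 - ∑ l ∈ Finset.univ \ S, majorityProb p N l := by
    intro N
    have := Finset.sum_sdiff (f := fun l => majorityProb p N l) hSsub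
    rw [sum_majorityProb hm p hsum N] at this
    linarith
  simp only [heq]
  simpa using tendsto_const_nhds.sub hzero
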